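/- arXiv:2507.00194 — 4 statements merged into one kernel-verified Lean document; each statement's English description precedes it below -/
import Mathlib

section
/- Let n ≥ 2, let p₁, …, pₙ be varying S-probabilities with p₁ + ⋯ + pₙ = 1 (the constant function 1), and let P := {Σ_{i∈I} pᵢ : I ⊆ {1, …, n}} be the resulting Boolean algebra of S-probabilities with 2^n elements. Let q be a varying S-probability with q ≤ p₁, q ≠ p₁, such that p₁ − q is varying. Then q ∉ P and q is not critical: there exists a Boolean algebra Q of S-probabilities (with 2^{n+1} elements) such that P ∪ {q} ⊆ Q. -/
/-- An `S`-probability: a function `p : S → ℝ` with `0 ≤ p s ≤ 1` for all `s`. -/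
def IsProb (S : Type*) (p : S → ℝ) : Prop := ∀ s, 0 ≤ p s ∧ p s ≤ 1

/-- An algebra of `S`-probabilities: a set of `S`-probabilities containing the constant `0`,
closed under `p ↦ 1 - p`, and containing `p + q + r` for pairwise orthogonal `p, q, r`
(where `p ⊥ q` means `p ≤ 1 - q`). -/
def IsAlg (S : Type*) (P : Set (S → ℝ)) : Prop :=
  (∀ p ∈ P, IsProb S p) ∧
  (0 : S → ℝ) ∈ P ∧
  (∀ p ∈ P, 1 - p ∈ P) ∧
  ∀ p q r : S → ℝ, p ∈ P → q ∈ P → r ∈ P →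
    p ≤ 1 - q → q ≤ 1 - r → r ≤ 1 - p → p + q + r ∈ P

/-- A function `p : S → ℝ` is varying if it is neither everywhere `≤ 1/2`
nor everywhere `≥ 1/2`. -/
def Varying (S : Type*) (p : S → ℝ) : Prop :=
  ¬(∀ s, p s ≤ 1 / 2) ∧ ¬(∀ s, 1 / 2 ≤ p s)

/-- `m` is the infimum of `p` and `q` within the poset `(P, ≤)`. -/
def IsInfIn (S : Type*) (P : Set (S → ℝ)) (p q m : S → ℝ) : Prop :=
  m ∈ P ∧ m ≤ p ∧ m ≤ q ∧ ∀ u ∈ P, u ≤ p → u ≤ q → u ≤ m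

/-- `j` is the supremum of `p` and `q` within the poset `(P, ≤)`. -/
def IsSupIn (S : Type*) (P : Set (S → ℝ)) (p q j : S → ℝ) : Prop :=
  j ∈ P ∧ p ≤ j ∧ q ≤ j ∧ ∀ u ∈ P, p ≤ u → q ≤ u → j ≤ u

/-- A Boolean algebra of `S`-probabilities: an algebra of `S`-probabilities in which any two
elements have an infimum and a supremum within `(P, ≤)`, the resulting lattice is distributive,
and for every `p ∈ P` the infimum of `p` and `1 - p` is `0` and their supremum is `1`. -/
def IsBooleanAlg (S : Type*) (P : Set (S → ℝ)) : Prop :=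
  IsAlg S P ∧
  (∀ p ∈ P, ∀ q ∈ P, (∃ m, IsInfIn S P p q m) ∧ (∃ j, IsSupIn S P p q j)) ∧
  (∀ p ∈ P, ∀ q ∈ P, ∀ r ∈ P, ∀ qr a pq pr b : S → ℝ,
    IsSupIn S P q r qr → IsInfIn S P p qr a →
    IsInfIn S P p q pq → IsInfIn S P p r pr → IsSupIn S P pq pr b → a = b) ∧
  ∀ p ∈ P, IsInfIn S P p (1 - p) 0 ∧ IsSupIn S P p (1 - p) 1

/-- The extension `(p, c)` of `p : S → ℝ` to `S̄ = S ∪ {s̄}` (modelled as `Option S`,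
with `none` playing the role of the new state `s̄`), taking the value `c` at `s̄`. -/
def extFun {S : Type*} (p : S → ℝ) (c : ℝ) : Option S → ℝ :=
  fun x => Option.elim x c p

/-- The `0,1`-extension `P̄ = {(p,0) : p ∈ P} ∪ {(p,1) : p ∈ P}` of a set `P` of
`S`-probabilities. -/
def extSet {S : Type*} (P : Set (S → ℝ)) : Set (Option S → ℝ) :=
  {f | ∃ p ∈ P, f = extFun p 0 ∨ f = extFun p 1}

/-- `p` and `q` are partially reciprocal below `1/2`. -/
def PRBelow (S : Type*) (p q : S → ℝ) : Prop := ∀ s, min (p s) (q s) ≤ 1 / 2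

/-- `p` and `q` are partially reciprocal above `1/2`. -/
def PRAbove (S : Type*) (p q : S → ℝ) : Prop := ∀ s, 1 / 2 ≤ max (p s) (q s)

/-- `p` and `q` are reciprocal. -/
def Reciprocal (S : Type*) (p q : S → ℝ) : Prop := PRBelow S p q ∧ PRAbove S p q

/-- Two functions are incomparable in the pointwise order. -/
def Incomp {S : Type*} (a b : S → ℝ) : Prop := ¬a ≤ b ∧ ¬b ≤ a

/-- An algebra of `S`-probabilities of type `MO₂`,
with the six pairwise distinct elements `0, p₁, 1 - p₁, p₂, 1 - p₂, 1` such that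
`p₁, 1 - p₁, p₂, 1 - p₂` are pairwise incomparable. -/
def IsMO2 (S : Type*) (P : Set (S → ℝ)) (p1 p2 : S → ℝ) : Prop :=
  IsAlg S P ∧
  P = {0, p1, 1 - p1, p2, 1 - p2, 1} ∧
  ([(0 : S → ℝ), p1, 1 - p1, p2, 1 - p2, 1].Pairwise (· ≠ ·)) ∧
  Incomp p1 (1 - p1) ∧ Incomp p1 p2 ∧ Incomp p1 (1 - p2) ∧
  Incomp (1 - p1) p2 ∧ Incomp (1 - p1) (1 - p2) ∧ Incomp p2 (1 - p2)

/-- `f` is an atom of `P`: a minimal element of `P \ {0}`. -/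
def IsAtomOf (S : Type*) (P : Set (S → ℝ)) (f : S → ℝ) : Prop :=
  f ∈ P ∧ f ≠ 0 ∧ ∀ g ∈ P, g ≠ 0 → g ≤ f → g = f
lemma infUnique16 {S : Type*} {P : Set (S → ℝ)} {p q a b : S → ℝ}
    (ha : IsInfIn S P p q a) (hb : IsInfIn S P p q b) : a = b :=
  le_antisymm (hb.2.2.2 a ha.1 ha.2.1 ha.2.2.1) (ha.2.2.2 b hb.1 hb.2.1 hb.2.2.1)

lemma supUnique16 {S : Type*} {P : Set (S → ℝ)} {p q a b : S → ℝ}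
    (ha : IsSupIn S P p q a) (hb : IsSupIn S P p q b) : a = b :=
  le_antisymm (ha.2.2.2 b hb.1 hb.2.1 hb.2.2.1) (hb.2.2.2 a ha.1 ha.2.1 ha.2.2.1)

lemma partitionBoolean16 {S : Type*} {m : ℕ} {r : Fin m → (S → ℝ)}
    (hprob : ∀ i, IsProb S (r i)) (hvar : ∀ i, Varying S (r i))
    (hsum : ∑ i, r i = 1) :
    IsBooleanAlg S {f | ∃ I : Finset (Fin m), f = ∑ i ∈ I, r i} ∧
      ({f | ∃ I : Finset (Fin m), f = ∑ i ∈ I, r i}).ncard = 2 ^ m := by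
  set σ : Finset (Fin m) → (S → ℝ) := fun I => ∑ i ∈ I, r i with hσ
  set Q : Set (S → ℝ) := {f | ∃ I : Finset (Fin m), f = σ I} with hQ
  have happ : ∀ (I : Finset (Fin m)) (s : S), σ I s = ∑ i ∈ I, r i s := by
    intro I s; simp [hσ]
  have hsum1 : ∀ s, ∑ i, r i s = 1 := by
    intro s
    have := congrFun hsum s
    simpa using this
  have mono : ∀ {I J : Finset (Fin m)}, I ⊆ J → σ I ≤ σ J := by
    intro I J h s
    rw [happ, happ]
    exact Finset.sum_le_sum_of_subset_of_nonneg h (fun i _ _ => (hprob i s).1)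
  have compl_eq : ∀ I : Finset (Fin m), σ Iᶜ = 1 - σ I := by
    intro I; funext s
    have h := Finset.sum_add_sum_compl I (fun i => r i s)
    rw [hsum1 s] at h
    have h1 := happ I s
    have h2 := happ Iᶜ s
    simp only [Pi.sub_apply, Pi.one_apply]
    linarith
  have key : ∀ {I J : Finset (Fin m)}, σ I ≤ σ J → I ⊆ J := by
    intro I J h k hk
    by_contra hkJ
    refine (hvar k).1 (fun s => ?_)
    have h1 : r k s ≤ σ I s := by
      rw [happ]
      exact Finset.single_le_sum (fun i _ => (hprob i s).1) hk
    have h2 : σ J ≤ σ ({k}ᶜ : Finset (Fin m)) := by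
      refine mono (fun j hj => ?_)
      simp only [Finset.mem_compl, Finset.mem_singleton]
      rintro rfl; exact hkJ hj
    have h3 : σ ({k}ᶜ : Finset (Fin m)) s = 1 - r k s := by
      rw [compl_eq]
      simp [happ]
    have h4 := h s
    have h5 := h2 s
    rw [h3] at h5
    linarith
  have hmem : ∀ I, σ I ∈ Q := fun I => ⟨I, rfl⟩
  have hle1 : ∀ I, σ I ≤ (1 : S → ℝ) := by
    intro I
    have h := mono (Finset.subset_univ I)
    have : σ Finset.univ = 1 := hsum
    rwa [this] at h
  have hprobQ : ∀ f ∈ Q, IsProb S f := by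
    rintro f ⟨I, rfl⟩ s
    constructor
    · rw [happ]; exact Finset.sum_nonneg (fun i _ => (hprob i s).1)
    · exact hle1 I s
  have isInf : ∀ I J, IsInfIn S Q (σ I) (σ J) (σ (I ∩ J)) := by
    intro I J
    refine ⟨hmem _, mono Finset.inter_subset_left, mono Finset.inter_subset_right, ?_⟩
    rintro u ⟨K, rfl⟩ h1 h2
    exact mono (Finset.subset_inter (key h1) (key h2))
  have isSup : ∀ I J, IsSupIn S Q (σ I) (σ J) (σ (I ∪ J)) := by
    intro I J
    refine ⟨hmem _, mono Finset.subset_union_left, mono Finset.subset_union_right, ?_⟩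
    rintro u ⟨K, rfl⟩ h1 h2
    exact mono (Finset.union_subset (key h1) (key h2))
  constructor
  · refine ⟨⟨hprobQ, ⟨∅, by simp [hσ]⟩, ?_, ?_⟩, ?_, ?_, ?_⟩
    · rintro f ⟨I, rfl⟩
      exact ⟨Iᶜ, (compl_eq I).symm⟩
    · rintro f g h ⟨I, rfl⟩ ⟨J, rfl⟩ ⟨K, rfl⟩ hIJ hJK hKI
      rw [← compl_eq] at hIJ hJK hKI
      have dIJ : Disjoint I J := Finset.disjoint_left.mpr
        (fun a ha => Finset.mem_compl.mp (key hIJ ha))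
      have dJK : Disjoint J K := Finset.disjoint_left.mpr
        (fun a ha => Finset.mem_compl.mp (key hJK ha))
      have dKI : Disjoint K I := Finset.disjoint_left.mpr
        (fun a ha => Finset.mem_compl.mp (key hKI ha))
      refine ⟨(I ∪ J) ∪ K, ?_⟩
      simp only [hσ]
      rw [Finset.sum_union (by simp [Finset.disjoint_union_left, dJK, dKI.symm]),
        Finset.sum_union dIJ]
    · rintro f ⟨I, rfl⟩ g ⟨J, rfl⟩
      exact ⟨⟨_, isInf I J⟩, ⟨_, isSup I J⟩⟩
    · rintro f ⟨I, rfl⟩ g ⟨J, rfl⟩ h ⟨K, rfl⟩ qr a pq pr b hqr ha hpq hpr hb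
      have e1 : qr = σ (J ∪ K) := supUnique16 hqr (isSup J K)
      rw [e1] at ha
      have e2 : a = σ (I ∩ (J ∪ K)) := infUnique16 ha (isInf I (J ∪ K))
      have e3 : pq = σ (I ∩ J) := infUnique16 hpq (isInf I J)
      have e4 : pr = σ (I ∩ K) := infUnique16 hpr (isInf I K)
      rw [e3, e4] at hb
      have e5 : b = σ ((I ∩ J) ∪ (I ∩ K)) := supUnique16 hb (isSup (I ∩ J) (I ∩ K))
      rw [e2, e5, Finset.inter_union_distrib_left]
    · rintro f ⟨I, rfl⟩
      rw [← compl_eq]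
      constructor
      · have h := isInf I Iᶜ
        rwa [Finset.inter_compl, show σ ∅ = 0 from by simp [hσ]] at h
      · have h := isSup I Iᶜ
        rwa [Finset.union_compl, show σ Finset.univ = 1 from hsum] at h
  · have inj : Function.Injective σ := by
      intro I J h
      exact Finset.Subset.antisymm (key h.le) (key h.ge)
    have : Q = Set.range σ := by
      ext f
      simp [hQ, eq_comm]
    rw [this, ← Nat.card_coe_set_eq, Nat.card_range_of_injective inj,
      Nat.card_eq_fintype_card, Fintype.card_finset, Fintype.card_fin]

theorem stmt_16 {S : Type*} [Nonempty S] {n : ℕ} (hn : 2 ≤ n)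
    (p : Fin n → (S → ℝ)) (hprob : ∀ i, IsProb S (p i))
    (hvar : ∀ i, Varying S (p i)) (hsum : ∑ i, p i = 1)
    {q : S → ℝ} (hq : IsProb S q) (hqv : Varying S q)
    (hq1 : q ≤ p ⟨0, by omega⟩) (hqne : q ≠ p ⟨0, by omega⟩)
    (hd : Varying S (p ⟨0, by omega⟩ - q)) :
    q ∉ {f | ∃ I : Finset (Fin n), f = ∑ i ∈ I, p i} ∧
    ∃ Q : Set (S → ℝ), IsBooleanAlg S Q ∧ Q.ncard = 2 ^ (n + 1) ∧
      {f | ∃ I : Finset (Fin n), f = ∑ i ∈ I, p i} ∪ {q} ⊆ Q := by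
  have hz : (0 : ℕ) < n := by omega
  set z : Fin n := ⟨0, hz⟩ with hzdef
  have hq1' : q ≤ p z := hq1
  have hqne' : q ≠ p z := hqne
  have hd' : Varying S (p z - q) := hd
  have hsum1 : ∀ s, ∑ i, p i s = 1 := by
    intro s; have := congrFun hsum s; simpa using this
  constructor
  · -- q is not in P
    rintro ⟨I, hI⟩
    obtain ⟨s0, hs0⟩ := not_forall.mp hqv.1
    have hs0' : 1 / 2 < q s0 := not_le.mp hs0
    have hIsub : ∀ i ∈ I, i = z := by
      intro i hi
      by_contra hne
      obtain ⟨s1, hs1⟩ := not_forall.mp (hvar i).1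
      have hs1' : 1 / 2 < p i s1 := not_le.mp hs1
      have hle : p i s1 ≤ q s1 := by
        have := congrFun hI s1
        simp only [Finset.sum_apply] at this
        rw [this]
        exact Finset.single_le_sum (fun j _ => (hprob j s1).1) hi
      have hzq : q s1 ≤ p z s1 := hq1' s1
      have hpair : p i s1 + p z s1 ≤ 1 := by
        have h2 : ∑ j ∈ ({i, z} : Finset (Fin n)), p j s1 ≤ ∑ j, p j s1 :=
          Finset.sum_le_sum_of_subset_of_nonneg (Finset.subset_univ _)
            (fun j _ _ => (hprob j s1).1)
        rw [Finset.sum_pair hne, hsum1 s1] at h2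
        exact h2
      linarith
    rcases I.eq_empty_or_nonempty with rfl | hne
    · simp only [Finset.sum_empty] at hI
      rw [hI] at hs0'
      norm_num at hs0'
    · have : I = {z} := Finset.eq_singleton_iff_nonempty_unique_mem.mpr ⟨hne, hIsub⟩
      rw [this, Finset.sum_singleton] at hI
      exact hqne' hI
  · -- construction of Q
    set r : Fin (n + 1) → (S → ℝ) :=
      Fin.cons q (fun i => if i = z then p z - q else p i) with hrdef
    have hr0 : r 0 = q := rfl
    have hrs : ∀ i : Fin n, r i.succ = if i = z then p z - q else p i := by
      intro i; simp [hrdef]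
    have hprob' : ∀ i, IsProb S (r i) := by
      intro i
      refine Fin.cases ?_ ?_ i
      · rw [hr0]; exact hq
      · intro j
        rw [hrs]
        split_ifs with h
        · intro s
          have h1 := hq1' s
          have h2 := (hprob z s).2
          have h3 := (hq s).1
          simp only [Pi.sub_apply]
          constructor <;> linarith
        · exact hprob j
    have hvar' : ∀ i, Varying S (r i) := by
      intro i
      refine Fin.cases ?_ ?_ i
      · rw [hr0]; exact hqv
      · intro j
        rw [hrs]
        split_ifs with h
        · exact hd'
        · exact hvar j
    have hsum' : ∑ i, r i = 1 := by
      rw [Fin.sum_univ_succ, hr0]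
      have hcongr : ∀ j ∈ (Finset.univ : Finset (Fin n)), r j.succ
          = p j - (if j = z then q else 0) := by
        intro j _
        rw [hrs]
        split_ifs with h
        · rw [h]
        · simp
      rw [Finset.sum_congr rfl hcongr, Finset.sum_sub_distrib,
        Finset.sum_ite_eq' Finset.univ z (fun _ => q), hsum]
      simp only [Finset.mem_univ, if_true]
      ring
    obtain ⟨hbool, hcard⟩ := partitionBoolean16 hprob' hvar' hsum'
    refine ⟨{f | ∃ I : Finset (Fin (n + 1)), f = ∑ i ∈ I, r i}, hbool, hcard, ?_⟩
    rintro f (⟨I, rfl⟩ | rfl)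
    · -- sums over subsets of the old partition are in Q
      have himg : ∀ J : Finset (Fin n),
          ∑ i ∈ J.image Fin.succ, r i = ∑ i ∈ J, r i.succ := by
        intro J
        rw [Finset.sum_image (fun a _ b _ h => Fin.succ_injective n h)]
      by_cases hzI : z ∈ I
      · refine ⟨insert 0 (I.image Fin.succ), ?_⟩
        rw [Finset.sum_insert (by
          simp only [Finset.mem_image, not_exists]
          rintro a ⟨_, ha⟩
          exact Fin.succ_ne_zero a ha), himg, hr0]
        have hcongr : ∀ j ∈ I, r j.succ = p j - (if j = z then q else 0) := by
          intro j _
          rw [hrs]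
          split_ifs with h
          · rw [h]
          · simp
        rw [Finset.sum_congr rfl hcongr, Finset.sum_sub_distrib,
          Finset.sum_ite_eq' I z (fun _ => q), if_pos hzI]
        ring
      · refine ⟨I.image Fin.succ, ?_⟩
        rw [himg]
        refine Finset.sum_congr rfl (fun j hj => ?_)
        rw [hrs, if_neg ?_]
        rintro rfl
        exact hzI hj
    · exact ⟨{0}, by rw [Finset.sum_singleton, hr0]⟩
end

section
/- Let S have at most 3 elements and let P be an algebra of S-probabilities of type MO₂, say P = {0, p₁, 1 − p₁, p₂, 1 − p₂, 1}, and let g, h ∈ P be incomparable (neither g ≤ h nor h ≤ g). Then there do not exist an S-probability q ∉ P, a Boolean algebra Q of S-probabilities with P ∪ {q} ⊆ Q, and an element v ∈ Q such that 0 < q < g < v < 1 and 0 < q < h < v < 1 (where < denotes the strict pointwise order: a < b iff a ≤ b and a ≠ b). -/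
theorem stmt_17 {S : Type*} [Nonempty S] [Finite S] (hS : Nat.card S ≤ 3)
    {P : Set (S → ℝ)} {p1 p2 : S → ℝ} (hMO : IsMO2 S P p1 p2)
    {g h : S → ℝ} (hg : g ∈ P) (hh : h ∈ P) (hgh1 : ¬g ≤ h) (hgh2 : ¬h ≤ g) :
    ¬∃ (q : S → ℝ) (Q : Set (S → ℝ)) (v : S → ℝ),
      q ∉ P ∧ IsBooleanAlg S Q ∧ P ∪ {q} ⊆ Q ∧ v ∈ Q ∧
      0 < q ∧ q < g ∧ g < v ∧ q < h ∧ h < v ∧ v < 1 := by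
  rintro ⟨q, Q, v, hqP, ⟨hAlg, hInfSup, hDistr, hCompl⟩, hsub, hvQ,
      h0q, hqg, hgv, hqh, hhv, hv1⟩
  obtain ⟨hProb, h0Q, hNeg, hSum⟩ := hAlg
  have hgQ : g ∈ Q := hsub (Set.mem_union_left _ hg)
  have hhQ : h ∈ Q := hsub (Set.mem_union_left _ hh)
  have hqQ : q ∈ Q := hsub (Set.mem_union_right _ rfl)
  have hvnQ : (1 : S → ℝ) - v ∈ Q := hNeg v hvQ
  have hgnQ : (1 : S → ℝ) - g ∈ Q := hNeg g hgQ
  have hhnQ : (1 : S → ℝ) - h ∈ Q := hNeg h hhQ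
  -- every nonzero element of Q exceeds 1/2 somewhere
  have cross : ∀ x ∈ Q, x ≠ 0 → ∃ s, 1 / 2 < x s := by
    intro x hx hx0
    by_contra hc
    push_neg at hc
    obtain ⟨-, -, -, hmin⟩ := (hCompl x hx).1
    have hle : x ≤ (1 : S → ℝ) - x := by
      intro s
      have h1 := hc s
      simp only [Pi.sub_apply, Pi.one_apply]
      linarith only [h1]
    have hx0' : x ≤ 0 := hmin x hx le_rfl hle
    apply hx0
    apply le_antisymm hx0'
    intro s
    simpa using (hProb x hx s).1
  -- the state where q > 1/2
  obtain ⟨s1, hs1⟩ := cross q hqQ h0q.ne'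
  have hs1g : 1 / 2 < g s1 := lt_of_lt_of_le hs1 (hqg.le s1)
  have hs1h : 1 / 2 < h s1 := lt_of_lt_of_le hs1 (hqh.le s1)
  -- the state where 1 - v > 1/2
  have hv1' : (1 : S → ℝ) - v ≠ 0 := by
    intro he
    apply hv1.ne
    funext s
    have := congrFun he s
    simp only [Pi.sub_apply, Pi.one_apply, Pi.zero_apply] at this ⊢
    linarith only [this]
  obtain ⟨s2, hs2⟩ := cross _ hvnQ hv1'
  rw [Pi.sub_apply, Pi.one_apply] at hs2
  have hs2g : g s2 < 1 / 2 := by have h1 := hgv.le s2; linarith only [h1, hs2]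
  have hs2h : h s2 < 1 / 2 := by have h1 := hhv.le s2; linarith only [h1, hs2]
  -- a = inf(g, 1-h)
  obtain ⟨a, ha⟩ := (hInfSup g hgQ ((1 : S → ℝ) - h) hhnQ).1
  have ha0 : a ≠ 0 := by
    intro h0
    rw [h0] at ha
    obtain ⟨m, hm⟩ := (hInfSup g hgQ h hhQ).1
    have hsup1 : IsSupIn S Q h ((1 : S → ℝ) - h) 1 := (hCompl h hhQ).2
    have hinfg1 : IsInfIn S Q g 1 g :=
      ⟨hgQ, le_rfl, fun s => by simpa using (hProb g hgQ s).2, fun u _ hu _ => hu⟩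
    have hsupm : IsSupIn S Q m 0 m :=
      ⟨hm.1, le_rfl, fun s => by simpa using (hProb m hm.1 s).1, fun u _ hu _ => hu⟩
    have hgm : g = m :=
      hDistr g hgQ h hhQ _ hhnQ 1 g m 0 m hsup1 hinfg1 hm ha hsupm
    exact hgh1 (hgm ▸ hm.2.2.1)
  obtain ⟨s3, hs3⟩ := cross a ha.1 ha0
  have hs3g : 1 / 2 < g s3 := lt_of_lt_of_le hs3 (ha.2.1 s3)
  have hs3h : h s3 < 1 / 2 := by
    have h1 := ha.2.2.1 s3
    simp only [Pi.sub_apply, Pi.one_apply] at h1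
    linarith only [h1, hs3]
  -- b = inf(h, 1-g)
  obtain ⟨b, hb⟩ := (hInfSup h hhQ ((1 : S → ℝ) - g) hgnQ).1
  have hb0 : b ≠ 0 := by
    intro h0
    rw [h0] at hb
    obtain ⟨m, hm⟩ := (hInfSup h hhQ g hgQ).1
    have hsup1 : IsSupIn S Q g ((1 : S → ℝ) - g) 1 := (hCompl g hgQ).2
    have hinfh1 : IsInfIn S Q h 1 h :=
      ⟨hhQ, le_rfl, fun s => by simpa using (hProb h hhQ s).2, fun u _ hu _ => hu⟩
    have hsupm : IsSupIn S Q m 0 m :=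
      ⟨hm.1, le_rfl, fun s => by simpa using (hProb m hm.1 s).1, fun u _ hu _ => hu⟩
    have hhm : h = m :=
      hDistr h hhQ g hgQ _ hgnQ 1 h m 0 m hsup1 hinfh1 hm hb hsupm
    exact hgh2 (hhm ▸ hm.2.2.1)
  obtain ⟨s4, hs4⟩ := cross b hb.1 hb0
  have hs4h : 1 / 2 < h s4 := lt_of_lt_of_le hs4 (hb.2.1 s4)
  have hs4g : g s4 < 1 / 2 := by
    have h1 := hb.2.2.1 s4
    simp only [Pi.sub_apply, Pi.one_apply] at h1
    linarith only [h1, hs4]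
  -- the four states are pairwise distinct
  have d12 : s1 ≠ s2 := by intro e; rw [e] at hs1g; linarith only [hs1g, hs2g]
  have d13 : s1 ≠ s3 := by intro e; rw [e] at hs1h; linarith only [hs1h, hs3h]
  have d14 : s1 ≠ s4 := by intro e; rw [e] at hs1g; linarith only [hs1g, hs4g]
  have d23 : s2 ≠ s3 := by intro e; rw [e] at hs2g; linarith only [hs2g, hs3g]
  have d24 : s2 ≠ s4 := by intro e; rw [e] at hs2h; linarith only [hs2h, hs4h]
  have d34 : s3 ≠ s4 := by intro e; rw [e] at hs3g; linarith only [hs3g, hs4g]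
  classical
  cases nonempty_fintype S
  have hc4 : ({s1, s2, s3, s4} : Finset S).card = 4 := by
    rw [Finset.card_insert_of_notMem (by simp [d12, d13, d14]),
        Finset.card_insert_of_notMem (by simp [d23, d24]),
        Finset.card_insert_of_notMem (by simp [d34]),
        Finset.card_singleton]
  have hle := Finset.card_le_univ ({s1, s2, s3, s4} : Finset S)
  rw [Nat.card_eq_fintype_card] at hS
  rw [hc4] at hle
  omega
end

section
/- Let P = {0, p₁, 1 − p₁, p₂, 1 − p₂, 1} be an algebra of S-probabilities of type MO₂, let q be an S-probability with q ∉ P, 0 < q < p₁ and 0 < q < p₂ (strict pointwise order), and let Q be a Boolean algebra of S-probabilities with P ∪ {q} ⊆ Q such that p₁ and p₂ are incomparable and the supremum v of p₁ and p₂ in Q satisfies v < 1. Then S has at least 4 elements. -/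
lemma key_decomp {S : Type*} {Q : Set (S → ℝ)} (hQ : IsBooleanAlg S Q)
    {x y m n : S → ℝ} (hx : x ∈ Q) (hy : y ∈ Q)
    (hm : IsInfIn S Q x y m) (hn : IsInfIn S Q x (1 - y) n) :
    x = m + n := by
  obtain ⟨⟨hProb, h0Q, hCompl, hSum⟩, hLat, hDist, hComp⟩ := hQ
  have hmQ := hm.1
  have hnQ := hn.1
  have hy' : (1 - y) ∈ Q := hCompl y hy
  have hxP : IsProb S x := hProb x hx
  have hmP : IsProb S m := hProb m hmQ
  have hnP : IsProb S n := hProb n hnQ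
  have hmn : m ≤ 1 - n := by
    intro s
    have h1 : m s ≤ y s := hm.2.2.1 s
    have h2 : n s ≤ (1 - y) s := hn.2.2.1 s
    simp only [Pi.sub_apply, Pi.one_apply] at *
    linarith
  have hmnQ : m + n ∈ Q := by
    have := hSum m n 0 hmQ hnQ h0Q hmn
      (by intro s; simp [(hnP s).2]) (by intro s; simpa using (hmP s).2)
    simpa using this
  have hle : m + n ≤ x := by
    have hxc : (1 - x) ∈ Q := hCompl x hx
    have h3 : m + n + (1 - x) ∈ Q := by
      refine hSum m n (1 - x) hmQ hnQ hxc hmn ?_ ?_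
      · intro s
        have := hn.2.1 s
        simp only [Pi.sub_apply, Pi.one_apply] at *
        linarith
      · intro s
        have := hm.2.1 s
        simp only [Pi.sub_apply, Pi.one_apply] at *
        linarith
    intro s
    have := (hProb _ h3 s).2
    simp only [Pi.add_apply, Pi.sub_apply, Pi.one_apply] at *
    linarith
  obtain ⟨-, ⟨j, hj⟩⟩ := hLat m hmQ n hnQ
  have hsupy : IsSupIn S Q y (1 - y) 1 := (hComp y hy).2
  have hinfx1 : IsInfIn S Q x 1 x :=
    ⟨hx, le_rfl, by intro s; simpa using (hxP s).2, fun u _ h _ => h⟩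
  have hxj : x = j := hDist x hx y hy (1 - y) hy' 1 x m n j hsupy hinfx1 hm hn hj
  have hge : x ≤ m + n := by
    rw [hxj]
    refine hj.2.2.2 (m + n) hmnQ ?_ ?_
    · intro s; have := (hnP s).1; simp only [Pi.add_apply]; linarith
    · intro s; have := (hmP s).1; simp only [Pi.add_apply]; linarith
  exact le_antisymm hge hle

lemma half_lemma {S : Type*} {Q : Set (S → ℝ)} (hQ : IsBooleanAlg S Q)
    {x : S → ℝ} (hx : x ∈ Q) (hpos : ∃ s, 0 < x s) : ∃ s, 1 / 2 < x s := by
  by_contra h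
  push_neg at h
  have hxle : x ≤ 1 - x := by
    intro s; have := h s; simp only [Pi.sub_apply, Pi.one_apply]; linarith
  have h0 := (hQ.2.2.2 x hx).1
  have hx0 := h0.2.2.2 x hx le_rfl hxle
  obtain ⟨s, hs⟩ := hpos
  have := hx0 s
  simp only [Pi.zero_apply] at this
  linarith

theorem stmt_18 {S : Type*} [Nonempty S] {P : Set (S → ℝ)} {p1 p2 : S → ℝ}
    (hMO : IsMO2 S P p1 p2) {q : S → ℝ} (hqn : q ∉ P)
    (h0q : (0 : S → ℝ) < q) (hq1 : q < p1) (hq2 : q < p2)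
    {Q : Set (S → ℝ)} (hQ : IsBooleanAlg S Q) (hsub : P ∪ {q} ⊆ Q)
    {v : S → ℝ} (hv : IsSupIn S Q p1 p2 v) (hv1 : v < (1 : S → ℝ)) :
    ∃ s1 s2 s3 s4 : S,
      s1 ≠ s2 ∧ s1 ≠ s3 ∧ s1 ≠ s4 ∧ s2 ≠ s3 ∧ s2 ≠ s4 ∧ s3 ≠ s4 := by
  obtain ⟨hAlgP, hPeq, hdist6, hI11, hI12, hI12', hI1'2, hI1'2', hI22'⟩ := hMO
  have hp1P : p1 ∈ P := by rw [hPeq]; simp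
  have hp2P : p2 ∈ P := by rw [hPeq]; simp
  have hp1'P : (1 - p1) ∈ P := by rw [hPeq]; simp
  have hp2'P : (1 - p2) ∈ P := by rw [hPeq]; simp
  have hp1Q : p1 ∈ Q := hsub (Set.mem_union_left _ hp1P)
  have hp2Q : p2 ∈ Q := hsub (Set.mem_union_left _ hp2P)
  have hp1'Q : (1 - p1) ∈ Q := hsub (Set.mem_union_left _ hp1'P)
  have hp2'Q : (1 - p2) ∈ Q := hsub (Set.mem_union_left _ hp2'P)
  have hqQ : q ∈ Q := hsub (Set.mem_union_right _ rfl)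
  obtain ⟨⟨m, hm⟩, -⟩ := hQ.2.1 p1 hp1Q p2 hp2Q
  obtain ⟨⟨n, hn⟩, -⟩ := hQ.2.1 p1 hp1Q (1 - p2) hp2'Q
  obtain ⟨⟨k, hk⟩, -⟩ := hQ.2.1 (1 - p1) hp1'Q p2 hp2Q
  obtain ⟨⟨w, hw⟩, -⟩ := hQ.2.1 (1 - p1) hp1'Q (1 - p2) hp2'Q
  have hd1 : p1 = m + n := key_decomp hQ hp1Q hp2Q hm hn
  have hd2 : (1 - p1) = k + w := key_decomp hQ hp1'Q hp2Q hk hw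
  have hProb := hQ.1.1
  have hm0 : ∀ s, 0 ≤ m s := fun s => (hProb m hm.1 s).1
  have hn0 : ∀ s, 0 ≤ n s := fun s => (hProb n hn.1 s).1
  have hk0 : ∀ s, 0 ≤ k s := fun s => (hProb k hk.1 s).1
  have hw0 : ∀ s, 0 ≤ w s := fun s => (hProb w hw.1 s).1
  have hsum : ∀ s, m s + n s + k s + w s = 1 := by
    intro s
    have h1 := congrFun hd1 s
    have h2 := congrFun hd2 s
    simp only [Pi.add_apply, Pi.sub_apply, Pi.one_apply] at h1 h2
    linarith
  -- positivity of each of m, n, k, w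
  have hmpos : ∃ s, 0 < m s := by
    have hq0 : ¬ q ≤ 0 := h0q.not_ge
    rw [Pi.le_def] at hq0
    push_neg at hq0
    obtain ⟨s, hs⟩ := hq0
    have hqm : q ≤ m := hm.2.2.2 q hqQ (le_of_lt hq1) (le_of_lt hq2)
    exact ⟨s, lt_of_lt_of_le (by simpa using hs) (hqm s)⟩
  have hnpos : ∃ s, 0 < n s := by
    have h12 : ¬ p1 ≤ p2 := hI12.1
    rw [Pi.le_def] at h12
    push_neg at h12
    obtain ⟨s, hs⟩ := h12
    have h1 := congrFun hd1 s
    have h2 : m s ≤ p2 s := hm.2.2.1 s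
    simp only [Pi.add_apply] at h1
    exact ⟨s, by linarith⟩
  have hkpos : ∃ s, 0 < k s := by
    have h21 : ¬ p2 ≤ p1 := hI12.2
    rw [Pi.le_def] at h21
    push_neg at h21
    obtain ⟨s, hs⟩ := h21
    have h1 := congrFun hd2 s
    have h2 : w s ≤ (1 - p2) s := hw.2.2.1 s
    simp only [Pi.add_apply, Pi.sub_apply, Pi.one_apply] at h1 h2
    exact ⟨s, by linarith⟩
  have hwpos : ∃ s, 0 < w s := by
    have hv0 : ¬ (1 : S → ℝ) ≤ v := hv1.not_ge
    rw [Pi.le_def] at hv0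
    push_neg at hv0
    obtain ⟨s, hs⟩ := hv0
    have hvQ : v ∈ Q := hv.1
    have hvc : (1 - v) ∈ Q := hQ.1.2.2.1 v hvQ
    have hle1 : (1 - v) ≤ 1 - p1 := by
      intro t; have := hv.2.1 t; simp only [Pi.sub_apply, Pi.one_apply]; linarith
    have hle2 : (1 - v) ≤ 1 - p2 := by
      intro t; have := hv.2.2.1 t; simp only [Pi.sub_apply, Pi.one_apply]; linarith
    have hvw : (1 - v) ≤ w := hw.2.2.2 (1 - v) hvc hle1 hle2
    have := hvw s
    simp only [Pi.sub_apply, Pi.one_apply] at this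
    simp only [Pi.one_apply] at hs
    exact ⟨s, by linarith⟩
  obtain ⟨s1, hs1⟩ := half_lemma hQ hm.1 hmpos
  obtain ⟨s2, hs2⟩ := half_lemma hQ hn.1 hnpos
  obtain ⟨s3, hs3⟩ := half_lemma hQ hk.1 hkpos
  obtain ⟨s4, hs4⟩ := half_lemma hQ hw.1 hwpos
  refine ⟨s1, s2, s3, s4, ?_, ?_, ?_, ?_, ?_, ?_⟩ <;>
    · intro h
      subst h
      first
      | (have := hsum s1; have := hm0 s1; have := hn0 s1; have := hk0 s1; have := hw0 s1; linarith)
      | (have := hsum s2; have := hm0 s2; have := hn0 s2; have := hk0 s2; have := hw0 s2; linarith)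
      | (have := hsum s3; have := hm0 s3; have := hn0 s3; have := hk0 s3; have := hw0 s3; linarith)
      | (have := hsum s4; have := hm0 s4; have := hn0 s4; have := hk0 s4; have := hw0 s4; linarith)
end

section
/- Let P = {0, p₁, 1 − p₁, p₂, 1 − p₂, 1} be an algebra of S-probabilities of type MO₂ and let q be a varying S-probability with q ∉ P such that p₁ − q, p₂ − q and 1 + q − p₁ − p₂ are varying S-probabilities (in particular they take values in [0,1]). Then P ∪ {q} can be embedded into a Boolean algebra: there exists a Boolean algebra Q of S-probabilities with P ∪ {q} ⊆ Q; i.e., q is critical. -/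
section Aux
variable {S : Type*}

/-- Sum of a family over a finset, pointwise. -/
def sumFun (a : Fin 4 → (S → ℝ)) (A : Finset (Fin 4)) : S → ℝ :=
  fun s => ∑ i ∈ A, a i s

lemma aux_key (a : Fin 4 → (S → ℝ))
    (hnn : ∀ i s, 0 ≤ a i s)
    (hsum : ∀ s, ∑ i : Fin 4, a i s = 1)
    (hhigh : ∀ i, ∃ s, 1/2 < a i s) :
    ∀ A B : Finset (Fin 4), sumFun a A ≤ sumFun a B ↔ A ⊆ B := by
  intro A B
  constructor
  · intro h
    intro i hiA
    by_contra hiB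
    obtain ⟨s, hs⟩ := hhigh i
    have h1 : a i s ≤ sumFun a A s :=
      Finset.single_le_sum (fun j _ => hnn j s) hiA
    have hBsub : B ⊆ Finset.univ \ {i} := fun j hj => by
      simp only [Finset.mem_sdiff, Finset.mem_univ, Finset.mem_singleton, true_and]
      rintro rfl; exact hiB hj
    have h2 : sumFun a B s ≤ ∑ j ∈ Finset.univ \ {i}, a j s :=
      Finset.sum_le_sum_of_subset_of_nonneg hBsub (fun j _ _ => hnn j s)
    have h3 : ∑ j ∈ Finset.univ \ {i}, a j s = 1 - a i s := by
      have := Finset.sum_sdiff (Finset.singleton_subset_iff.mpr (Finset.mem_univ i))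
        (f := fun j => a j s)
      simp only [Finset.sum_singleton] at this
      rw [hsum s] at this
      linarith
    have := h s
    simp only [sumFun] at *
    linarith
  · intro h s
    exact Finset.sum_le_sum_of_subset_of_nonneg h (fun j _ _ => hnn j s)

lemma aux_compl (a : Fin 4 → (S → ℝ))
    (hsum : ∀ s, ∑ i : Fin 4, a i s = 1) (A : Finset (Fin 4)) :
    (1 : S → ℝ) - sumFun a A = sumFun a Aᶜ := by
  funext s
  have := Finset.sum_add_sum_compl A (fun i => a i s)
  rw [hsum s] at this
  simp only [Pi.sub_apply, Pi.one_apply, sumFun]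
  linarith

lemma aux_boolean (a : Fin 4 → (S → ℝ))
    (hnn : ∀ i s, 0 ≤ a i s)
    (hsum : ∀ s, ∑ i : Fin 4, a i s = 1)
    (hhigh : ∀ i, ∃ s, 1/2 < a i s) :
    IsBooleanAlg S {f | ∃ A : Finset (Fin 4), f = sumFun a A} := by
  classical
  set Q : Set (S → ℝ) := {f | ∃ A : Finset (Fin 4), f = sumFun a A} with hQ
  have key := aux_key a hnn hsum hhigh
  have hmem : ∀ A, sumFun a A ∈ Q := fun A => ⟨A, rfl⟩
  have h0 : sumFun a ∅ = (0 : S → ℝ) := by funext s; simp [sumFun]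
  have h1 : sumFun a Finset.univ = (1 : S → ℝ) := by funext s; simp [sumFun, hsum s]
  have hcompl : ∀ A, (1 : S → ℝ) - sumFun a A = sumFun a Aᶜ := aux_compl a hsum
  -- infimum and supremum constructions
  have hInf : ∀ A B, IsInfIn S Q (sumFun a A) (sumFun a B) (sumFun a (A ∩ B)) := by
    intro A B
    refine ⟨hmem _, (key _ _).mpr (Finset.inter_subset_left), (key _ _).mpr (Finset.inter_subset_right), ?_⟩
    rintro u ⟨U, rfl⟩ hUA hUB
    exact (key _ _).mpr (Finset.subset_inter ((key _ _).mp hUA) ((key _ _).mp hUB))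
  have hSup : ∀ A B, IsSupIn S Q (sumFun a A) (sumFun a B) (sumFun a (A ∪ B)) := by
    intro A B
    refine ⟨hmem _, (key _ _).mpr Finset.subset_union_left, (key _ _).mpr Finset.subset_union_right, ?_⟩
    rintro u ⟨U, rfl⟩ hAU hBU
    exact (key _ _).mpr (Finset.union_subset ((key _ _).mp hAU) ((key _ _).mp hBU))
  have hInfUniq : ∀ p q m m' : S → ℝ, IsInfIn S Q p q m → IsInfIn S Q p q m' → m = m' := by
    intro p q m m' hm hm'
    exact le_antisymm (hm'.2.2.2 m hm.1 hm.2.1 hm.2.2.1) (hm.2.2.2 m' hm'.1 hm'.2.1 hm'.2.2.1)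
  have hSupUniq : ∀ p q j j' : S → ℝ, IsSupIn S Q p q j → IsSupIn S Q p q j' → j = j' := by
    intro p q j j' hj hj'
    exact le_antisymm (hj.2.2.2 j' hj'.1 hj'.2.1 hj'.2.2.1) (hj'.2.2.2 j hj.1 hj.2.1 hj.2.2.1)
  refine ⟨⟨?_, ⟨∅, h0.symm⟩, ?_, ?_⟩, ?_, ?_, ?_⟩
  · -- probs
    rintro p ⟨A, rfl⟩ s
    constructor
    · exact Finset.sum_nonneg (fun j _ => hnn j s)
    · have : sumFun a A s ≤ sumFun a Finset.univ s :=
        Finset.sum_le_sum_of_subset_of_nonneg (Finset.subset_univ A) (fun j _ _ => hnn j s)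
      rw [h1] at this; exact this
  · -- complement
    rintro p ⟨A, rfl⟩
    exact (hcompl A) ▸ hmem Aᶜ
  · -- triple orthogonal sums
    rintro p q r ⟨A, rfl⟩ ⟨B, rfl⟩ ⟨C, rfl⟩ hAB hBC hCA
    have dAB : Disjoint A B := by
      rw [hcompl B] at hAB
      exact Finset.disjoint_left.mpr (fun i hiA hiB =>
        (Finset.mem_compl.mp ((key _ _).mp hAB hiA)) hiB)
    have dBC : Disjoint B C := by
      rw [hcompl C] at hBC
      exact Finset.disjoint_left.mpr (fun i hiB hiC =>
        (Finset.mem_compl.mp ((key _ _).mp hBC hiB)) hiC)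
    have dCA : Disjoint C A := by
      rw [hcompl A] at hCA
      exact Finset.disjoint_left.mpr (fun i hiC hiA =>
        (Finset.mem_compl.mp ((key _ _).mp hCA hiC)) hiA)
    refine ⟨A ∪ B ∪ C, ?_⟩
    funext s
    have e1 : sumFun a (A ∪ B) s = sumFun a A s + sumFun a B s := by
      simpa [sumFun] using Finset.sum_union dAB (f := fun i => a i s)
    have e2 : sumFun a (A ∪ B ∪ C) s = sumFun a (A ∪ B) s + sumFun a C s := by
      have d : Disjoint (A ∪ B) C := Finset.disjoint_union_left.mpr ⟨dCA.symm, dBC⟩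
      simpa [sumFun] using Finset.sum_union d (f := fun i => a i s)
    simp only [Pi.add_apply]
    rw [e2, e1]
  · -- existence of inf and sup
    rintro p ⟨A, rfl⟩ q ⟨B, rfl⟩
    exact ⟨⟨_, hInf A B⟩, ⟨_, hSup A B⟩⟩
  · -- distributivity
    rintro p ⟨A, rfl⟩ q ⟨B, rfl⟩ r ⟨C, rfl⟩ qr x pq pr y hqr hx hpq hpr hy
    have hqr' := hSupUniq _ _ _ _ hqr (hSup B C)
    subst hqr'
    have hx' := hInfUniq _ _ _ _ hx (hInf A (B ∪ C))
    have hpq' := hInfUniq _ _ _ _ hpq (hInf A B)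
    have hpr' := hInfUniq _ _ _ _ hpr (hInf A C)
    subst hpq' hpr'
    have hy' := hSupUniq _ _ _ _ hy (hSup (A ∩ B) (A ∩ C))
    rw [hx', hy', Finset.inter_union_distrib_left]
  · -- complements give 0 and 1
    rintro p ⟨A, rfl⟩
    rw [hcompl A]
    constructor
    · have := hInf A Aᶜ
      rwa [Finset.inter_compl, h0] at this
    · have := hSup A Aᶜ
      rwa [Finset.union_compl, h1] at this

end Aux
theorem stmt_19 {S : Type*} [Nonempty S] {P : Set (S → ℝ)} {p1 p2 : S → ℝ}
    (hMO : IsMO2 S P p1 p2) {q : S → ℝ} (hqn : q ∉ P)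
    (hq : IsProb S q) (hqv : Varying S q)
    (h1p : IsProb S (p1 - q)) (h1v : Varying S (p1 - q))
    (h2p : IsProb S (p2 - q)) (h2v : Varying S (p2 - q))
    (h3p : IsProb S (1 + q - p1 - p2)) (h3v : Varying S (1 + q - p1 - p2)) :
    ∃ Q : Set (S → ℝ), IsBooleanAlg S Q ∧ P ∪ {q} ⊆ Q := by
  classical
  set a : Fin 4 → (S → ℝ) := ![q, p1 - q, p2 - q, 1 + q - p1 - p2] with ha
  have hnn : ∀ i s, 0 ≤ a i s := by
    intro i s
    fin_cases i
    · exact (hq s).1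
    · exact (h1p s).1
    · exact (h2p s).1
    · exact (h3p s).1
  have hsum : ∀ s, ∑ i : Fin 4, a i s = 1 := by
    intro s
    simp only [ha, Fin.sum_univ_four, Matrix.cons_val_zero, Matrix.cons_val_one,
      Matrix.head_cons, Matrix.cons_val_two, Matrix.tail_cons, Matrix.cons_val_three,
      Pi.sub_apply, Pi.add_apply, Pi.one_apply]
    ring
  have hhigh : ∀ i, ∃ s, 1/2 < a i s := by
    intro i
    fin_cases i
    · obtain ⟨s, hs⟩ := not_forall.mp hqv.1; exact ⟨s, lt_of_not_ge hs⟩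
    · obtain ⟨s, hs⟩ := not_forall.mp h1v.1; exact ⟨s, lt_of_not_ge hs⟩
    · obtain ⟨s, hs⟩ := not_forall.mp h2v.1; exact ⟨s, lt_of_not_ge hs⟩
    · obtain ⟨s, hs⟩ := not_forall.mp h3v.1; exact ⟨s, lt_of_not_ge hs⟩
  refine ⟨{f | ∃ A : Finset (Fin 4), f = sumFun a A}, aux_boolean a hnn hsum hhigh, ?_⟩
  have rep : ∀ (f : S → ℝ) (A : Finset (Fin 4)),
      (∀ s, f s = ∑ i ∈ A, a i s) → f ∈ {f | ∃ A : Finset (Fin 4), f = sumFun a A} := by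
    intro f A h
    exact ⟨A, funext fun s => h s⟩
  intro f hf
  rcases hf with hf | hf
  · rw [hMO.2.1] at hf
    simp only [Set.mem_insert_iff, Set.mem_singleton_iff] at hf
    rcases hf with rfl | rfl | rfl | rfl | rfl | rfl
    · exact rep _ ∅ (fun s => by simp)
    · refine rep _ {0, 1} (fun s => ?_)
      rw [show ({0, 1} : Finset (Fin 4)) = insert 0 {1} from rfl,
        Finset.sum_insert (by decide), Finset.sum_singleton]
      simp [ha]
    · refine rep _ {2, 3} (fun s => ?_)
      rw [show ({2, 3} : Finset (Fin 4)) = insert 2 {3} from rfl,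
        Finset.sum_insert (by decide), Finset.sum_singleton]
      simp [ha]; ring
    · refine rep _ {0, 2} (fun s => ?_)
      rw [show ({0, 2} : Finset (Fin 4)) = insert 0 {2} from rfl,
        Finset.sum_insert (by decide), Finset.sum_singleton]
      simp [ha]
    · refine rep _ {1, 3} (fun s => ?_)
      rw [show ({1, 3} : Finset (Fin 4)) = insert 1 {3} from rfl,
        Finset.sum_insert (by decide), Finset.sum_singleton]
      simp [ha]; ring
    · refine rep _ Finset.univ (fun s => (hsum s).symm)
  · rw [Set.mem_singleton_iff] at hf
    subst hf
    exact rep _ {0} (fun s => by simp [ha])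
end
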